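/- Let x₁ < y₁ < x₂ < y₂ < … < y_{k−1} < x_k be two interlacing sequences of real numbers. Then there exists a unique probability measure m on ℝ, supported on the finite set {x₁, …, x_k}, such that for every z ∈ ℂ \ ℝ, ∫_ℝ 1/(z − x) dm(x) = Π_{i=1}^{k−1}(z − y_i) / Π_{i=1}^{k}(z − x_i). Equivalently, the residues μ_i = Π_{j=1}^{k−1}(x_i − y_j) / Π_{j≠i}(x_i − x_j) satisfy μ_i > 0 for all i and Σ_{i=1}^k μ_i = 1, and m = Σ_i μ_i δ_{x_i}. -/

import Mathlib

open MeasureTheory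
open scoped Classical

/-- `m` is the transition measure of the interlacing data `x₀ < y₀ < x₁ < … < y_{k-1} < x_k`:
a probability measure on `ℝ` supported on `{x₀, …, x_k}` whose Cauchy transform is
`Π_i (z - y_i) / Π_i (z - x_i)` for all non-real `z`. -/
def IsTransitionMeasure (k : ℕ) (x : Fin (k + 1) → ℝ) (y : Fin k → ℝ)
    (m : Measure ℝ) : Prop :=
  IsProbabilityMeasure m ∧ m {t : ℝ | ∀ i, t ≠ x i} = 0 ∧
    ∀ z : ℂ, z.im ≠ 0 →
      ∫ t : ℝ, (z - (t : ℂ))⁻¹ ∂m =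
        (∏ i : Fin k, (z - (y i : ℂ))) / ∏ i : Fin (k + 1), (z - (x i : ℂ))

namespace TMaux

open Polynomial Finset
open scoped ENNReal

variable {k : ℕ}

/-- Product over `univ.erase i` rewritten via `succAbove`. -/
lemma prod_erase_eq_succAbove {M : Type*} [CommMonoid M] (f : Fin (k + 1) → M)
    (i : Fin (k + 1)) :
    ∏ j ∈ Finset.univ.erase i, f j = ∏ j : Fin k, f (i.succAbove j) := by
  have h := Fin.univ_succAbove k i
  rw [show (Finset.univ.erase i : Finset (Fin (k + 1)))
      = Finset.univ.map (Fin.succAboveEmb i) by rw [h, Finset.erase_cons]]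
  rw [Finset.prod_map]
  rfl

variable (x : Fin (k + 1) → ℝ) (y : Fin k → ℝ)

lemma denom_ne_zero (hx : Function.Injective x) (i : Fin (k + 1)) :
    ∏ j ∈ Finset.univ.erase i, (x i - x j) ≠ 0 := by
  rw [Finset.prod_ne_zero_iff]
  intro j hj
  have hij : j ≠ i := (Finset.mem_erase.mp hj).1
  exact sub_ne_zero.mpr fun h => hij ((hx h).symm)

lemma denomC_ne_zero (hx : Function.Injective x) (i : Fin (k + 1)) :
    ∏ j ∈ Finset.univ.erase i, ((x i : ℂ) - (x j : ℂ)) ≠ 0 := by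
  rw [Finset.prod_ne_zero_iff]
  intro j hj
  have hij : j ≠ i := (Finset.mem_erase.mp hj).1
  rw [sub_ne_zero]
  exact fun h => hij ((hx ((Complex.ofReal_inj).mp h)).symm)

lemma mu_pos (hx : StrictMono x) (hinter : ∀ i : Fin k, x i.castSucc < y i ∧ y i < x i.succ)
    (i : Fin (k + 1)) :
    0 < (∏ j : Fin k, (x i - y j)) / ∏ j ∈ Finset.univ.erase i, (x i - x j) := by
  rw [div_pos_iff]
  apply mul_pos_iff.mp
  rw [prod_erase_eq_succAbove (fun j => x i - x j) i, ← Finset.prod_mul_distrib]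
  apply Finset.prod_pos
  intro j _
  rcases lt_or_ge j.castSucc i with h | h
  · rw [Fin.succAbove_of_castSucc_lt _ _ h]
    have h1 : y j < x i := by
      have : j.succ ≤ i := Fin.castSucc_lt_iff_succ_le.mp h
      exact lt_of_lt_of_le (hinter j).2 (hx.monotone this)
    have h2 : x j.castSucc < x i := hx h
    exact mul_pos (by linarith) (by linarith)
  · rw [Fin.succAbove_of_le_castSucc _ _ h]
    have h1 : x i < y j := lt_of_le_of_lt (hx.monotone h) (hinter j).1
    have h2 : x i < x j.succ := lt_of_le_of_lt (hx.monotone h) (hx (Fin.castSucc_lt_succ (i := j)))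
    exact mul_pos_of_neg_of_neg (by linarith) (by linarith)

/-- The key Lagrange partial-fraction polynomial identity over `ℝ`. -/
lemma poly_id (hx : Function.Injective x) :
    (∏ j : Fin k, (X - C (y j)) : ℝ[X]) =
      ∑ i : Fin (k + 1),
        C ((∏ j : Fin k, (x i - y j)) / ∏ j ∈ Finset.univ.erase i, (x i - x j)) *
          ∏ j ∈ Finset.univ.erase i, (X - C (x j)) := by
  set f : ℝ[X] := ∏ j : Fin k, (X - C (y j)) with hf
  have hmon : f.Monic := monic_prod_of_monic _ _ fun j _ => monic_X_sub_C _
  have hnd : f.natDegree = k := by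
    rw [hf, natDegree_prod_of_monic _ _ fun j _ => monic_X_sub_C _]
    simp [natDegree_X_sub_C]
  have hvs : Set.InjOn x ↑(Finset.univ : Finset (Fin (k + 1))) := fun a _ b _ h => hx h
  have hdeg : f.degree < (Finset.univ : Finset (Fin (k + 1))).card := by
    rw [degree_eq_natDegree hmon.ne_zero, hnd]
    simp only [Finset.card_univ, Fintype.card_fin]
    exact_mod_cast Nat.lt_succ_self k
  have hint := Lagrange.eq_interpolate hvs hdeg
  rw [Lagrange.interpolate_apply] at hint
  rw [hint]
  refine Finset.sum_congr rfl fun i _ => ?_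
  have hev : f.eval (x i) = ∏ j : Fin k, (x i - y j) := by
    simp [hf, eval_prod]
  have hb : Lagrange.basis Finset.univ x i =
      C ((∏ j ∈ Finset.univ.erase i, (x i - x j))⁻¹) *
        ∏ j ∈ Finset.univ.erase i, (X - C (x j)) := by
    unfold Lagrange.basis Lagrange.basisDivisor
    rw [Finset.prod_mul_distrib, ← map_prod, ← Finset.prod_inv_distrib]
  rw [hev, hb, ← mul_assoc, ← C_mul, div_eq_mul_inv]

lemma sum_mu (hx : Function.Injective x) :
    (∑ i : Fin (k + 1),
      (∏ j : Fin k, (x i - y j)) / ∏ j ∈ Finset.univ.erase i, (x i - x j)) = 1 := by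
  have h := congrArg (fun p : ℝ[X] => p.coeff k) (poly_id x y hx)
  have hmon : (∏ j : Fin k, (X - C (y j)) : ℝ[X]).Monic :=
    monic_prod_of_monic _ _ fun j _ => monic_X_sub_C _
  have hnd : (∏ j : Fin k, (X - C (y j)) : ℝ[X]).natDegree = k := by
    rw [natDegree_prod_of_monic _ _ fun j _ => monic_X_sub_C _]
    simp [natDegree_X_sub_C]
  have hl : (∏ j : Fin k, (X - C (y j)) : ℝ[X]).coeff k = 1 := by
    have := hmon.coeff_natDegree
    rwa [hnd] at this
  rw [hl, finset_sum_coeff] at h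
  have hr : ∀ i : Fin (k + 1),
      (C ((∏ j : Fin k, (x i - y j)) / ∏ j ∈ Finset.univ.erase i, (x i - x j)) *
        ∏ j ∈ Finset.univ.erase i, (X - C (x j))).coeff k =
      (∏ j : Fin k, (x i - y j)) / ∏ j ∈ Finset.univ.erase i, (x i - x j) := by
    intro i
    have hm : (∏ j ∈ Finset.univ.erase i, (X - C (x j)) : ℝ[X]).Monic :=
      monic_prod_of_monic _ _ fun j _ => monic_X_sub_C _
    have hcard : (Finset.univ.erase i).card = k := by
      rw [Finset.card_erase_of_mem (Finset.mem_univ i)]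
      simp
    have hnd' : (∏ j ∈ Finset.univ.erase i, (X - C (x j)) : ℝ[X]).natDegree = k := by
      rw [natDegree_prod_of_monic _ _ fun j _ => monic_X_sub_C _]
      simp [natDegree_X_sub_C, hcard]
    have h1 : (∏ j ∈ Finset.univ.erase i, (X - C (x j)) : ℝ[X]).coeff k = 1 := by
      have := hm.coeff_natDegree
      rwa [hnd'] at this
    rw [coeff_C_mul, h1, mul_one]
  rw [Finset.sum_congr rfl fun i _ => hr i] at h
  exact h.symm

/-- Complex evaluated version of the partial fraction identity. -/
lemma complex_id (hx : Function.Injective x) (z : ℂ) :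
    (∏ j : Fin k, (z - (y j : ℂ))) =
      ∑ i : Fin (k + 1),
        (((∏ j : Fin k, (x i - y j)) / ∏ j ∈ Finset.univ.erase i, (x i - x j) : ℝ) : ℂ) *
          ∏ j ∈ Finset.univ.erase i, (z - (x j : ℂ)) := by
  have h := congrArg (Polynomial.aeval z) (poly_id x y hx)
  simpa [map_prod, map_sum, map_sub, Polynomial.aeval_X, Polynomial.aeval_C,
    Complex.coe_algebraMap] using h

lemma sum_inv_mul_prod (c : Fin (k + 1) → ℂ) (z : ℂ)
    (hz : ∀ j : Fin (k + 1), z - (x j : ℂ) ≠ 0) :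
    (∑ i : Fin (k + 1), c i * (z - (x i : ℂ))⁻¹) * ∏ j : Fin (k + 1), (z - (x j : ℂ)) =
      ∑ i : Fin (k + 1), c i * ∏ j ∈ Finset.univ.erase i, (z - (x j : ℂ)) := by
  rw [Finset.sum_mul]
  refine Finset.sum_congr rfl fun i _ => ?_
  rw [← Finset.mul_prod_erase Finset.univ _ (Finset.mem_univ i), mul_assoc]
  congr 1
  rw [← mul_assoc, inv_mul_cancel₀ (hz i), one_mul]

lemma sub_ne_zero_of_im (z : ℂ) (hz : z.im ≠ 0) (t : ℝ) : z - (t : ℂ) ≠ 0 := by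
  intro h
  apply hz
  have : z = (t : ℂ) := sub_eq_zero.mp h
  rw [this]
  exact Complex.ofReal_im t

/-- Cauchy transform formula. -/
lemma cauchy_formula (hx : Function.Injective x) (z : ℂ) (hz : z.im ≠ 0) :
    ∑ i : Fin (k + 1),
        (((∏ j : Fin k, (x i - y j)) / ∏ j ∈ Finset.univ.erase i, (x i - x j) : ℝ) : ℂ) *
          (z - (x i : ℂ))⁻¹ =
      (∏ i : Fin k, (z - (y i : ℂ))) / ∏ i : Fin (k + 1), (z - (x i : ℂ)) := by
  have hzj : ∀ j : Fin (k + 1), z - (x j : ℂ) ≠ 0 := fun j => sub_ne_zero_of_im z hz (x j)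
  have hQ : (∏ i : Fin (k + 1), (z - (x i : ℂ))) ≠ 0 :=
    Finset.prod_ne_zero_iff.mpr fun j _ => hzj j
  rw [eq_div_iff hQ, sum_inv_mul_prod x _ z hzj]
  exact (complex_id x y hx z).symm

/-- A measure supported on finitely many points is a combination of Dirac masses. -/
lemma measure_eq_sum_dirac (hx : Function.Injective x) (m' : Measure ℝ)
    (hsupp : m' {t : ℝ | ∀ i, t ≠ x i} = 0) :
    m' = ∑ i : Fin (k + 1), m' {x i} • Measure.dirac (x i) := by
  ext s hs
  rw [Measure.finset_sum_apply]
  have key : m' s = ∑ i : Fin (k + 1), m' (s ∩ {x i}) := by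
    have hle : m' s ≤ m' ((⋃ i, s ∩ {x i}) ∪ {t : ℝ | ∀ i, t ≠ x i}) := by
      apply measure_mono
      intro t ht
      by_cases h : ∀ i, t ≠ x i
      · exact Or.inr h
      · push_neg at h
        obtain ⟨i, hi⟩ := h
        exact Or.inl (Set.mem_iUnion.mpr ⟨i, ht, hi⟩)
    have hUeq : m' (⋃ i, s ∩ {x i}) = ∑ i : Fin (k + 1), m' (s ∩ {x i}) := by
      rw [measure_iUnion ?_ fun i => hs.inter (measurableSet_singleton _)]
      · exact tsum_fintype _
      · intro i j hij
        refine Set.disjoint_left.mpr fun t hti htj => hij ?_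
        have h1 : t = x i := hti.2
        have h2 : t = x j := htj.2
        exact hx (h1 ▸ h2)
    have h1 : m' s ≤ ∑ i : Fin (k + 1), m' (s ∩ {x i}) := by
      calc m' s ≤ m' ((⋃ i, s ∩ {x i}) ∪ {t : ℝ | ∀ i, t ≠ x i}) := hle
        _ ≤ m' (⋃ i, s ∩ {x i}) + m' {t : ℝ | ∀ i, t ≠ x i} := measure_union_le _ _
        _ = m' (⋃ i, s ∩ {x i}) := by rw [hsupp, add_zero]
        _ = _ := hUeq
    have h2 : ∑ i : Fin (k + 1), m' (s ∩ {x i}) ≤ m' s := by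
      rw [← hUeq]
      exact measure_mono (Set.iUnion_subset fun i => Set.inter_subset_left)
    exact le_antisymm h1 h2
  rw [key]
  refine Finset.sum_congr rfl fun i _ => ?_
  rw [Measure.smul_apply, Measure.dirac_apply' _ hs, smul_eq_mul]
  by_cases h : x i ∈ s
  · rw [Set.indicator_of_mem h, Pi.one_apply, mul_one]
    congr 1
    rw [Set.inter_eq_right.mpr (by simpa using h)]
  · rw [Set.indicator_of_notMem h, mul_zero]
    have : s ∩ {x i} = ∅ := by
      ext t; simp only [Set.mem_inter_iff, Set.mem_singleton_iff, Set.mem_empty_iff_false,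
        iff_false, not_and]
      intro ht h'; exact h (h' ▸ ht)
    rw [this, measure_empty]

lemma integrable_dirac' {g : ℝ → ℂ} (hg : Continuous g) (a : ℝ) :
    Integrable g (Measure.dirac a) := by
  refine ⟨hg.aestronglyMeasurable, ?_⟩
  rw [HasFiniteIntegral]
  rw [lintegral_dirac]
  exact ENNReal.coe_lt_top

lemma integral_sum_smul_dirac (c : Fin (k + 1) → ℝ≥0∞) (hc : ∀ i, c i ≠ ⊤)
    {g : ℝ → ℂ} (hg : Continuous g) :
    ∫ t : ℝ, g t ∂(∑ i : Fin (k + 1), c i • Measure.dirac (x i)) =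
      ∑ i : Fin (k + 1), (c i).toReal • g (x i) := by
  rw [integral_finset_sum_measure fun i _ => (integrable_dirac' hg (x i)).smul_measure (hc i)]
  refine Finset.sum_congr rfl fun i _ => ?_
  rw [integral_smul_measure, integral_dirac]

lemma nonreal_infinite : {z : ℂ | z.im ≠ 0}.Infinite := by
  refine Set.infinite_of_injective_forall_mem
    (f := fun n : ℕ => Complex.I * ((n : ℂ) + 1)) ?_ ?_
  · intro a b hab
    have h1 : ((a : ℂ) + 1) = ((b : ℂ) + 1) := mul_left_cancel₀ Complex.I_ne_zero hab
    have : (a : ℂ) = (b : ℂ) := by linear_combination h1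
    exact_mod_cast this
  · intro n
    simp only [Set.mem_setOf_eq]
    have : (Complex.I * ((n : ℂ) + 1)).im = (n : ℝ) + 1 := by
      simp [Complex.mul_im]
    rw [this]
    positivity

lemma residues_zero (hx : Function.Injective x) (c : Fin (k + 1) → ℂ)
    (h : ∀ z : ℂ, z.im ≠ 0 →
      ∑ i : Fin (k + 1), c i * ∏ j ∈ Finset.univ.erase i, (z - (x j : ℂ)) = 0) :
    ∀ i, c i = 0 := by
  set p : ℂ[X] := ∑ i : Fin (k + 1),
    C (c i) * ∏ j ∈ Finset.univ.erase i, (X - C ((x j : ℂ))) with hp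
  have hev : ∀ z : ℂ, p.eval z =
      ∑ i : Fin (k + 1), c i * ∏ j ∈ Finset.univ.erase i, (z - (x j : ℂ)) := by
    intro z
    simp [hp, eval_finset_sum, eval_prod]
  have hzero : p = 0 := by
    apply Polynomial.eq_zero_of_infinite_isRoot
    apply Set.Infinite.mono _ nonreal_infinite
    intro z hz
    simp only [Set.mem_setOf_eq, IsRoot.def]
    rw [hev z]
    exact h z hz
  intro i
  have h1 : p.eval ((x i : ℂ)) = 0 := by rw [hzero]; simp
  rw [hev] at h1
  rw [Finset.sum_eq_single i ?_ (by simp)] at h1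
  · rcases mul_eq_zero.mp h1 with h2 | h2
    · exact h2
    · exact absurd h2 (denomC_ne_zero x hx i)
  · intro l _ hl
    have hmem : i ∈ Finset.univ.erase l := Finset.mem_erase.mpr ⟨Ne.symm hl, Finset.mem_univ i⟩
    rw [Finset.prod_eq_zero hmem (by rw [sub_self]), mul_zero]

end TMaux

/-- Given interlacing sequences `x₀ < y₀ < x₁ < y₁ < … < y_{k-1} < x_k`, there exists a
unique probability measure `m` on `ℝ`, supported on `{x₀, …, x_k}`, whose Cauchy
transform equals `Π_{i}(z - y_i) / Π_{i}(z - x_i)` for all `z ∈ ℂ \ ℝ`.  Equivalently,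
the residues `μ_i = Π_j (x_i - y_j) / Π_{j ≠ i} (x_i - x_j)` are positive, sum to `1`,
and `m = Σ_i μ_i δ_{x_i}`. -/
theorem transition_measure_exists_unique (k : ℕ) (x : Fin (k + 1) → ℝ) (y : Fin k → ℝ)
    (hinter : ∀ i : Fin k, x i.castSucc < y i ∧ y i < x i.succ) :
    (∀ i : Fin (k + 1),
        0 < (∏ j : Fin k, (x i - y j)) / ∏ j ∈ Finset.univ.erase i, (x i - x j)) ∧
      (∑ i : Fin (k + 1),
          (∏ j : Fin k, (x i - y j)) / ∏ j ∈ Finset.univ.erase i, (x i - x j)) = 1 ∧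
      (∃! m : Measure ℝ, IsTransitionMeasure k x y m) ∧
      IsTransitionMeasure k x y
        (∑ i : Fin (k + 1),
          ENNReal.ofReal
              ((∏ j : Fin k, (x i - y j)) / ∏ j ∈ Finset.univ.erase i, (x i - x j)) •
            Measure.dirac (x i)) := by
  have hxm : StrictMono x := Fin.strictMono_iff_lt_succ.mpr
    (fun i => (hinter i).1.trans (hinter i).2)
  have hxinj : Function.Injective x := hxm.injective
  set μ : Fin (k + 1) → ℝ := fun i =>
    (∏ j : Fin k, (x i - y j)) / ∏ j ∈ Finset.univ.erase i, (x i - x j) with hμ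
  have hpos : ∀ i, 0 < μ i := fun i => TMaux.mu_pos x y hxm hinter i
  have hsum : ∑ i, μ i = 1 := TMaux.sum_mu x y hxinj
  set M : Measure ℝ :=
    ∑ i : Fin (k + 1), ENNReal.ofReal (μ i) • Measure.dirac (x i) with hM
  -- continuity of the integrand
  have hcont : ∀ z : ℂ, z.im ≠ 0 → Continuous (fun t : ℝ => (z - (t : ℂ))⁻¹) := by
    intro z hz
    exact (continuous_const.sub Complex.continuous_ofReal).inv₀
      (fun t => TMaux.sub_ne_zero_of_im z hz t)
  -- the support set is measurable
  have hms : MeasurableSet {t : ℝ | ∀ i, t ≠ x i} := by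
    have : {t : ℝ | ∀ i, t ≠ x i} = ⋂ i, ({x i} : Set ℝ)ᶜ := by
      ext t; simp [Set.mem_iInter]
    rw [this]
    exact MeasurableSet.iInter fun i => (measurableSet_singleton _).compl
  -- Cauchy transform of any combination of diracs with finite real weights
  have hint : ∀ (c : Fin (k + 1) → ℝ), (∀ i, 0 ≤ c i) → ∀ z : ℂ, z.im ≠ 0 →
      ∫ t : ℝ, (z - (t : ℂ))⁻¹
          ∂(∑ i : Fin (k + 1), ENNReal.ofReal (c i) • Measure.dirac (x i)) =
        ∑ i : Fin (k + 1), ((c i : ℂ)) * (z - (x i : ℂ))⁻¹ := by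
    intro c hc z hz
    rw [TMaux.integral_sum_smul_dirac x _ (fun i => ENNReal.ofReal_ne_top) (hcont z hz)]
    refine Finset.sum_congr rfl fun i _ => ?_
    rw [ENNReal.toReal_ofReal (hc i), Complex.real_smul]
  have hMtrans : IsTransitionMeasure k x y M := by
    refine ⟨⟨?_⟩, ?_, ?_⟩
    · -- probability
      rw [hM, Measure.finset_sum_apply]
      simp only [Measure.smul_apply, smul_eq_mul, measure_univ, mul_one]
      rw [← ENNReal.ofReal_sum_of_nonneg (fun i _ => (hpos i).le), hsum, ENNReal.ofReal_one]
    · -- support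
      rw [hM, Measure.finset_sum_apply]
      refine Finset.sum_eq_zero fun i _ => ?_
      rw [Measure.smul_apply, Measure.dirac_apply' _ hms]
      have : x i ∉ {t : ℝ | ∀ j, t ≠ x j} := fun h => h i rfl
      rw [Set.indicator_of_notMem this, smul_zero]
    · -- Cauchy transform
      intro z hz
      rw [hM, hint μ (fun i => (hpos i).le) z hz]
      exact TMaux.cauchy_formula x y hxinj z hz
  refine ⟨hpos, hsum, ⟨M, hMtrans, ?_⟩, hMtrans⟩
  -- uniqueness
  rintro m' ⟨hprob', hsupp', hcauchy'⟩
  haveI := hprob'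
  have hfin : ∀ i : Fin (k + 1), m' {x i} ≠ ⊤ := fun i => measure_ne_top m' _
  have hm'eq : m' = ∑ i : Fin (k + 1), m' {x i} • Measure.dirac (x i) :=
    TMaux.measure_eq_sum_dirac x hxinj m' hsupp'
  set a : Fin (k + 1) → ℝ := fun i => (m' {x i}).toReal with ha
  have hm'eq2 : m' = ∑ i : Fin (k + 1), ENNReal.ofReal (a i) • Measure.dirac (x i) := by
    rw [hm'eq]
    refine Finset.sum_congr rfl fun i _ => ?_
    rw [ha]
    simp only
    rw [ENNReal.ofReal_toReal (hfin i)]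
  have hanneg : ∀ i, 0 ≤ a i := fun i => ENNReal.toReal_nonneg
  -- equality of residues
  have hkey : ∀ z : ℂ, z.im ≠ 0 →
      ∑ i : Fin (k + 1), (((a i - μ i : ℝ)) : ℂ) *
        ∏ j ∈ Finset.univ.erase i, (z - (x j : ℂ)) = 0 := by
    intro z hz
    have h1 : ∑ i : Fin (k + 1), ((a i : ℂ)) * (z - (x i : ℂ))⁻¹ =
        ∑ i : Fin (k + 1), ((μ i : ℂ)) * (z - (x i : ℂ))⁻¹ := by
      have hA := hcauchy' z hz
      rw [hm'eq2, hint a hanneg z hz] at hA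
      rw [hA]
      exact (TMaux.cauchy_formula x y hxinj z hz).symm
    have hzj : ∀ j : Fin (k + 1), z - (x j : ℂ) ≠ 0 :=
      fun j => TMaux.sub_ne_zero_of_im z hz (x j)
    have h2 := congrArg (fun w => w * ∏ j : Fin (k + 1), (z - (x j : ℂ))) h1
    rw [TMaux.sum_inv_mul_prod x _ z hzj, TMaux.sum_inv_mul_prod x _ z hzj] at h2
    have h3 : ∑ i : Fin (k + 1), (((a i : ℂ)) - ((μ i : ℂ))) *
        ∏ j ∈ Finset.univ.erase i, (z - (x j : ℂ)) = 0 := by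
      rw [← sub_eq_zero] at h2
      rw [← h2, ← Finset.sum_sub_distrib]
      refine Finset.sum_congr rfl fun i _ => ?_
      ring
    convert h3 using 2 with i
    push_cast
    ring_nf
  have haeq : ∀ i, a i = μ i := by
    intro i
    have := TMaux.residues_zero x hxinj _ hkey i
    have h4 : ((a i - μ i : ℝ) : ℂ) = 0 := this
    have h5 : (a i - μ i : ℝ) = 0 := by exact_mod_cast h4
    linarith
  rw [hm'eq2, hM]
  refine Finset.sum_congr rfl fun i _ => ?_
  rw [haeq i]
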